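/- Let q be a prime, m a positive integer, and C a nonzero cyclic code of length m over F_q of dimension k such that no codeword of C has Hamming weight m. Then the transitive permutation group G(C) on Z_q × Z_m contains an intersecting set of size q^k = q·|G(C)_v|, hence ρ(G(C)) ≥ q. -/

import Mathlib

/-- A set of permutations is intersecting if any two of its elements agree at some point. -/
def Intersecting {V : Type*} (F : Set (Equiv.Perm V)) : Prop :=
  ∀ g ∈ F, ∀ h ∈ F, ∃ v, g v = h v

/-- The permutation of `ZMod q × ZMod m` given by `(i, j) ↦ (i + c j, j)`. -/
def beta {q m : ℕ} (c : ZMod m → ZMod q) : Equiv.Perm (ZMod q × ZMod m) where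
  toFun p := (p.1 + c p.2, p.2)
  invFun p := (p.1 - c p.2, p.2)
  left_inv p := by cases p; simp
  right_inv p := by cases p; simp

/-- The permutation of `ZMod q × ZMod m` given by `(i, j) ↦ (i, j + 1)`. -/
def alpha {q m : ℕ} : Equiv.Perm (ZMod q × ZMod m) where
  toFun p := (p.1, p.2 + 1)
  invFun p := (p.1, p.2 - 1)
  left_inv p := by cases p; simp
  right_inv p := by cases p; simp

/-- The permutation group generated by `alpha` together with `beta c` for codewords `c ∈ C`. -/
def GC (q m : ℕ) (C : Submodule (ZMod q) (ZMod m → ZMod q)) :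
    Subgroup (Equiv.Perm (ZMod q × ZMod m)) :=
  Subgroup.closure ({alpha} ∪ (fun c : ZMod m → ZMod q => beta c) '' ↑C)

section Aux

variable {q m : ℕ}

lemma beta_apply (c : ZMod m → ZMod q) (p : ZMod q × ZMod m) :
    beta c p = (p.1 + c p.2, p.2) := rfl

lemma alpha_pow_apply (t : ℕ) (p : ZMod q × ZMod m) :
    (alpha ^ t : Equiv.Perm (ZMod q × ZMod m)) p = (p.1, p.2 + t) := by
  induction t with
  | zero => simp
  | succ n ih =>
      rw [pow_succ']
      have : (alpha * alpha ^ n : Equiv.Perm (ZMod q × ZMod m)) p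
          = alpha ((alpha ^ n) p) := rfl
      rw [this, ih]
      show (p.1, p.2 + (n : ZMod m) + 1) = (p.1, p.2 + ((n : ℕ) + 1 : ℕ))
      push_cast
      ring_nf

lemma beta_mul_alpha_pow_apply (c : ZMod m → ZMod q) (t : ℕ) (p : ZMod q × ZMod m) :
    (beta c * alpha ^ t : Equiv.Perm (ZMod q × ZMod m)) p = (p.1 + c (p.2 + t), p.2 + t) := by
  have : (beta c * alpha ^ t : Equiv.Perm (ZMod q × ZMod m)) p
      = beta c ((alpha ^ t : Equiv.Perm (ZMod q × ZMod m)) p) := rfl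
  rw [this, alpha_pow_apply, beta_apply]

lemma beta_injective : Function.Injective (beta (q := q) (m := m)) := by
  intro c c' h
  funext j
  have := congrArg (fun g : Equiv.Perm (ZMod q × ZMod m) => (g (0, j)).1) h
  simpa [beta_apply] using this

lemma shift_mem (C : Submodule (ZMod q) (ZMod m → ZMod q))
    (hcyc : ∀ c ∈ C, (fun j => c (j - 1)) ∈ C) :
    ∀ c ∈ C, ∀ n : ℕ, (fun j => c (j - n)) ∈ C := by
  intro c hc n
  induction n with
  | zero => simpa using hc
  | succ n ih =>
      have h := hcyc _ ih
      have : (fun j : ZMod m => c (j - 1 - n)) = fun j : ZMod m => c (j - (n + 1 : ℕ)) := by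
        funext j; push_cast; ring_nf
      rw [← this]
      exact h

/-- Every element of `GC` has the normal form `beta c * alpha ^ t`. -/
lemma GC_normal_form (C : Submodule (ZMod q) (ZMod m → ZMod q))
    (hcyc : ∀ c ∈ C, (fun j => c (j - 1)) ∈ C) [NeZero m]
    {g : Equiv.Perm (ZMod q × ZMod m)} (hg : g ∈ GC q m C) :
    ∃ c ∈ C, ∃ t : ℕ, g = beta c * alpha ^ t := by
  induction hg using Subgroup.closure_induction with
  | mem x hx =>
      rcases hx with hx | ⟨c, hc, rfl⟩
      · refine ⟨0, C.zero_mem, 1, Equiv.ext fun p => ?_⟩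
        simp only [Set.mem_singleton_iff] at hx
        subst hx
        rw [beta_mul_alpha_pow_apply]
        show (p.1, p.2 + 1) = (p.1 + (0 : ZMod q), p.2 + ((1 : ℕ) : ZMod m))
        norm_num
      · exact ⟨c, hc, 0, by simp⟩
  | one =>
      refine ⟨0, C.zero_mem, 0, Equiv.ext fun p => ?_⟩
      rw [beta_mul_alpha_pow_apply]
      show p = (p.1 + (0 : ZMod q), p.2 + ((0 : ℕ) : ZMod m))
      norm_num
  | mul x y _ _ ihx ihy =>
      obtain ⟨c, hc, s, rfl⟩ := ihx
      obtain ⟨c', hc', t, rfl⟩ := ihy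
      refine ⟨(fun j => c' (j - s)) + c, C.add_mem (shift_mem C hcyc c' hc' s) hc, s + t,
        Equiv.ext fun p => ?_⟩
      have h1 : (beta c * alpha ^ s * (beta c' * alpha ^ t) : Equiv.Perm (ZMod q × ZMod m)) p
          = (beta c * alpha ^ s : Equiv.Perm (ZMod q × ZMod m))
            ((beta c' * alpha ^ t : Equiv.Perm (ZMod q × ZMod m)) p) := rfl
      rw [h1, beta_mul_alpha_pow_apply, beta_mul_alpha_pow_apply, beta_mul_alpha_pow_apply]
      have h2 : p.2 + (t : ZMod m) + s = p.2 + ((s + t : ℕ) : ZMod m) := by push_cast; ring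
      refine Prod.ext ?_ h2
      show p.1 + c' (p.2 + t) + c (p.2 + t + s)
        = p.1 + ((fun j => c' (j - s)) + c) (p.2 + ((s + t : ℕ) : ZMod m))
      have h3 : p.2 + ((s + t : ℕ) : ZMod m) - s = p.2 + t := by push_cast; ring
      simp only [Pi.add_apply, h3, ← h2]
      ring_nf
  | inv x _ ihx =>
      obtain ⟨c, hc, s, rfl⟩ := ihx
      set t : ℕ := (-(s : ZMod m)).val with ht
      have htc : (t : ZMod m) = -(s : ZMod m) := by rw [ht, ZMod.natCast_val, ZMod.cast_id]
      refine ⟨fun j => -(c (j - (t : ZMod m))), C.neg_mem (shift_mem C hcyc c hc t), t, ?_⟩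
      rw [eq_comm, eq_inv_iff_mul_eq_one]
      refine Equiv.ext fun p => ?_
      have h1 : (beta (fun j => -(c (j - (t : ZMod m)))) * alpha ^ t * (beta c * alpha ^ s)
            : Equiv.Perm (ZMod q × ZMod m)) p
          = (beta (fun j => -(c (j - (t : ZMod m)))) * alpha ^ t : Equiv.Perm (ZMod q × ZMod m))
            ((beta c * alpha ^ s : Equiv.Perm (ZMod q × ZMod m)) p) := rfl
      rw [h1, beta_mul_alpha_pow_apply, beta_mul_alpha_pow_apply]
      have h2 : p.2 + (s : ZMod m) + (t : ZMod m) = p.2 := by rw [htc]; ring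
      have h3 : p.2 + (s : ZMod m) + (t : ZMod m) - (t : ZMod m) = p.2 + (s : ZMod m) := by ring
      refine Prod.ext ?_ h2
      show p.1 + c (p.2 + (s : ZMod m)) + -(c (p.2 + (s : ZMod m) + (t : ZMod m) - (t : ZMod m)))
        = p.1
      rw [h3]; ring

end Aux

theorem stmt10 (q m : ℕ) (hq : q.Prime) [NeZero m]
    (C : Submodule (ZMod q) (ZMod m → ZMod q)) (hC : C ≠ ⊥)
    (hcyc : ∀ c ∈ C, (fun j => c (j - 1)) ∈ C)
    (hzero : ∀ c ∈ C, ∃ j, c j = 0) :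
    ∀ v : ZMod q × ZMod m, ∃ F : Set (Equiv.Perm (ZMod q × ZMod m)),
      F ⊆ ↑(GC q m C) ∧ Intersecting F ∧
      F.ncard = q ^ Module.finrank (ZMod q) C ∧
      F.ncard = q * ({g : Equiv.Perm (ZMod q × ZMod m) | g ∈ GC q m C ∧ g v = v}).ncard := by
  haveI : Fact q.Prime := ⟨hq⟩
  haveI : NeZero q := ⟨hq.ne_zero⟩
  intro v
  -- a codeword which does not vanish at v.2
  obtain ⟨c₀, hc₀, hc₀0⟩ := Submodule.exists_mem_ne_zero_of_ne_bot hC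
  obtain ⟨j₀, hj₀⟩ : ∃ j₀, c₀ j₀ ≠ 0 := by
    by_contra h
    push_neg at h
    exact hc₀0 (funext h)
  set n₀ : ℕ := (v.2 - j₀).val with hn₀
  have hn₀c : ((n₀ : ℕ) : ZMod m) = v.2 - j₀ := by rw [hn₀, ZMod.natCast_val, ZMod.cast_id]
  set c₁ : ZMod m → ZMod q := fun j => c₀ (j - n₀) with hc₁def
  have hc₁ : c₁ ∈ C := shift_mem C hcyc c₀ hc₀ n₀
  have hc₁v : c₁ v.2 ≠ 0 := by
    have : v.2 - (n₀ : ZMod m) = j₀ := by rw [hn₀c]; ring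
    simpa [hc₁def, this] using hj₀
  -- the evaluation map at v.2 restricted to C
  let f : C →ₗ[ZMod q] ZMod q :=
    (LinearMap.proj v.2 : (ZMod m → ZMod q) →ₗ[ZMod q] ZMod q).comp C.subtype
  have hfsurj : Function.Surjective f := by
    intro a
    refine ⟨(a * (c₁ v.2)⁻¹) • ⟨c₁, hc₁⟩, ?_⟩
    show (a * (c₁ v.2)⁻¹) * c₁ v.2 = a
    field_simp
  have hrange : LinearMap.range f = ⊤ := LinearMap.range_eq_top.mpr hfsurj
  have hrk : 1 + Module.finrank (ZMod q) (LinearMap.ker f) = Module.finrank (ZMod q) C := by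
    have := f.finrank_range_add_finrank_ker
    rwa [hrange, finrank_top, Module.finrank_self] at this
  haveI : Fintype C := Fintype.ofFinite _
  haveI : Fintype (LinearMap.ker f) := Fintype.ofFinite _
  have hcard : ((fun c : ZMod m → ZMod q => beta c) '' (C : Set (ZMod m → ZMod q))).ncard = q ^ Module.finrank (ZMod q) C := by
    rw [Set.ncard_image_of_injective _ beta_injective, ← Nat.card_coe_set_eq]
    have hcc : Nat.card (↑C : Set (ZMod m → ZMod q)) = Nat.card C :=
      Nat.card_congr (Equiv.subtypeEquivRight fun x => by simp)
    rw [hcc, Nat.card_eq_fintype_card, Module.card_eq_pow_finrank (K := ZMod q), ZMod.card]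
  -- the intersecting family
  refine ⟨(fun c : ZMod m → ZMod q => beta c) '' (C : Set (ZMod m → ZMod q)), ?_, ?_, hcard, ?_⟩
  · intro g hg
    obtain ⟨c, hc, rfl⟩ := hg
    exact Subgroup.subset_closure (Or.inr ⟨c, hc, rfl⟩)
  · rintro g ⟨c, hc, rfl⟩ h ⟨c', hc', rfl⟩
    obtain ⟨j, hj⟩ := hzero (c - c') (C.sub_mem hc hc')
    have hj' : c j = c' j := by
      have : c j - c' j = 0 := hj
      linear_combination this
    exact ⟨(0, j), by simp [beta_apply, hj']⟩
  · -- identify the stabilizer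
    have hstab : {g : Equiv.Perm (ZMod q × ZMod m) | g ∈ GC q m C ∧ g v = v}
        = (fun c => beta c) '' {c | c ∈ C ∧ c v.2 = 0} := by
      ext g
      constructor
      · rintro ⟨hg, hgv⟩
        obtain ⟨c, hc, t, rfl⟩ := GC_normal_form C hcyc hg
        rw [beta_mul_alpha_pow_apply] at hgv
        have ht : v.2 + (t : ZMod m) = v.2 := congrArg Prod.snd hgv
        have ht0 : (t : ZMod m) = 0 := by
          have := ht
          rwa [add_eq_left] at this
        have hcv : c v.2 = 0 := by
          have h1 : v.1 + c (v.2 + t) = v.1 := congrArg Prod.fst hgv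
          rw [ht0, add_zero] at h1
          rwa [add_eq_left] at h1
        refine ⟨c, ⟨hc, hcv⟩, ?_⟩
        refine Equiv.ext fun p => ?_
        rw [beta_mul_alpha_pow_apply, beta_apply, ht0, add_zero]
      · rintro ⟨c, ⟨hc, hcv⟩, rfl⟩
        refine ⟨Subgroup.subset_closure (Or.inr ⟨c, hc, rfl⟩), ?_⟩
        rw [beta_apply, hcv, add_zero]
    have hequiv : {c : ZMod m → ZMod q // c ∈ C ∧ c v.2 = 0} ≃ LinearMap.ker f :=
      { toFun := fun x => ⟨⟨x.1, x.2.1⟩, LinearMap.mem_ker.mpr x.2.2⟩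
        invFun := fun y => ⟨y.1.1, y.1.2, LinearMap.mem_ker.mp y.2⟩
        left_inv := fun x => rfl
        right_inv := fun y => rfl }
    have hR : ({g : Equiv.Perm (ZMod q × ZMod m) | g ∈ GC q m C ∧ g v = v}).ncard
        = q ^ Module.finrank (ZMod q) (LinearMap.ker f) := by
      rw [hstab, Set.ncard_image_of_injective _ beta_injective, ← Nat.card_coe_set_eq]
      have h1 : Nat.card ({c : ZMod m → ZMod q | c ∈ C ∧ c v.2 = 0} : Set _)
          = Nat.card (LinearMap.ker f) := Nat.card_congr hequiv
      rw [h1, Nat.card_eq_fintype_card, Module.card_eq_pow_finrank (K := ZMod q), ZMod.card]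
    rw [hcard, hR, ← hrk, pow_add, pow_one]
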